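/- For partitions p ∈ P(k,l) and q ∈ P(l,m) (composable) and N ≥ 1, the associated linear maps satisfy T̊_{p*} = (T̊_p)*, T̊_{p⊗q} = T̊_p ⊗ T̊_q, and T̊_q ∘ T̊_p = N^{rl(q,p)} T̊_{qp}. -/

import Mathlib

/-- A two-row partition with `k` upper and `l` lower points, encoded as the
equivalence relation whose classes are the blocks. -/
abbrev PP (k l : ℕ) := Setoid (Fin k ⊕ Fin l)

/-- The involution `p*` (turning `p` upside down). -/
def swapP {k l : ℕ} (p : PP k l) : PP l k := Setoid.comap Sum.swap p

/-- Disjoint union of two setoids. -/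
def sumSetoid {α β : Type*} (s : Setoid α) (t : Setoid β) : Setoid (α ⊕ β) where
  r := Sum.LiftRel s.r t.r
  iseqv := by
    refine ⟨fun x => ?_, fun {x y} h => ?_, fun {x y z} h1 h2 => ?_⟩
    · cases x with
      | inl a => exact Sum.LiftRel.inl (s.iseqv.refl a)
      | inr b => exact Sum.LiftRel.inr (t.iseqv.refl b)
    · cases h with
      | inl h => exact Sum.LiftRel.inl (s.iseqv.symm h)
      | inr h => exact Sum.LiftRel.inr (t.iseqv.symm h)
    · cases h1 with
      | inl h1 =>
        cases h2 with
        | inl h2 => exact Sum.LiftRel.inl (s.iseqv.trans h1 h2)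
      | inr h1 =>
        cases h2 with
        | inr h2 => exact Sum.LiftRel.inr (t.iseqv.trans h1 h2)

/-- Reindexing equivalence for the horizontal concatenation (tensor product). -/
def tensorEquiv (k l k' l' : ℕ) :
    (Fin (k + k') ⊕ Fin (l + l')) ≃ ((Fin k ⊕ Fin l) ⊕ (Fin k' ⊕ Fin l')) :=
  (Equiv.sumCongr finSumFinEquiv.symm finSumFinEquiv.symm).trans
    (Equiv.sumSumSumComm (Fin k) (Fin k') (Fin l) (Fin l'))

/-- Tensor product (horizontal concatenation) of partitions. -/
def tensorP {k l k' l' : ℕ} (p : PP k l) (q : PP k' l') : PP (k + k') (l + l') :=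
  Setoid.comap (tensorEquiv k l k' l') (sumSetoid p q)

/-- The relation on `k ⊔ l ⊔ m` points generated by `p` (upper part) and `q` (lower part). -/
def midRel {k l m : ℕ} (p : PP k l) (q : PP l m) :
    (Fin k ⊕ (Fin l ⊕ Fin m)) → (Fin k ⊕ (Fin l ⊕ Fin m)) → Prop := fun x y =>
  (∃ a b : Fin k ⊕ Fin l, p.r a b ∧ x = Sum.map id Sum.inl a ∧ y = Sum.map id Sum.inl b) ∨
  (∃ a b : Fin l ⊕ Fin m, q.r a b ∧ x = Sum.inr a ∧ y = Sum.inr b)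

/-- The equivalence relation generated on `k ⊔ l ⊔ m` in the composition procedure. -/
def bigS {k l m : ℕ} (p : PP k l) (q : PP l m) : Setoid (Fin k ⊕ (Fin l ⊕ Fin m)) :=
  Relation.EqvGen.setoid (midRel p q)

/-- `compP q p` is the vertical composition `qp` (apply `p : P(k,l)` first, then `q : P(l,m)`). -/
def compP {k l m : ℕ} (q : PP l m) (p : PP k l) : PP k m :=
  Setoid.comap (Sum.map id Sum.inr) (bigS p q)

/-- `rlP q p` : the number of closed loops removed in the composition `qp`,
i.e. the blocks of the generated relation consisting only of middle points. -/
noncomputable def rlP {k l m : ℕ} (q : PP l m) (p : PP k l) : ℕ :=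
  Nat.card {c : Quotient (bigS p q) //
    ∀ x, Quotient.mk (bigS p q) x = c → ∃ b : Fin l, x = Sum.inr (Sum.inl b)}

/-- `b(p)` : number of blocks. -/
noncomputable def bP {k l : ℕ} (p : PP k l) : ℕ := Nat.card (Quotient p)

/-- `t(p)` : number of through-blocks (blocks meeting both rows). -/
noncomputable def tP {k l : ℕ} (p : PP k l) : ℕ :=
  Nat.card {c : Quotient p // (∃ a : Fin k, Quotient.mk p (Sum.inl a) = c) ∧
    (∃ b : Fin l, Quotient.mk p (Sum.inr b) = c)}

/-- `β(p) = b(p) - t(p)` : number of non-through-blocks. -/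
noncomputable def betaP {k l : ℕ} (p : PP k l) : ℕ := bP p - tP p

/-- The identity partition `|^{⊗k}`. -/
def idP (k : ℕ) : PP k k := Setoid.ker (Sum.elim (fun i : Fin k => i) (fun i : Fin k => i))

/-- A pair partition: all blocks have size two. -/
def isPair {k l : ℕ} (p : PP k l) : Prop := ∀ x, Nat.card {y // p.r x y} = 2

/-- A through-partition: a pair partition each of whose blocks connects exactly one
upper point to exactly one lower point. -/
def isThrough {k : ℕ} (p : PP k k) : Prop :=
  isPair p ∧ (∀ a b : Fin k, p.r (Sum.inl a) (Sum.inl b) → a = b) ∧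
    (∀ a b : Fin k, p.r (Sum.inr a) (Sum.inr b) → a = b)

/-- A building partition. -/
def isBuilding {k l : ℕ} (p : PP k l) : Prop :=
  (∀ b b' : Fin l, p.r (Sum.inr b) (Sum.inr b') → b = b') ∧
  (∀ b : Fin l, ∃ a : Fin k, p.r (Sum.inl a) (Sum.inr b)) ∧
  (∀ b b' : Fin l, ∀ a a' : Fin k, b < b' →
    IsLeast {x : Fin k | p.r (Sum.inl x) (Sum.inr b)} a →
    IsLeast {x : Fin k | p.r (Sum.inl x) (Sum.inr b')} a' → a < a')

/-- A projective partition: symmetric and idempotent. -/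
def isProjective {k : ℕ} (p : PP k k) : Prop := swapP p = p ∧ compP p p = p

/-- Linear position of the points, reading the upper row left to right and then the
lower row right to left. -/
def posP (k l : ℕ) : Fin k ⊕ Fin l → ℕ :=
  Sum.elim (fun i => (i : ℕ)) (fun j => k + (l - 1 - (j : ℕ)))

/-- Noncrossing partitions. -/
def isNC {k l : ℕ} (p : PP k l) : Prop :=
  ¬ ∃ x1 x2 x3 x4 : Fin k ⊕ Fin l,
    posP k l x1 < posP k l x2 ∧ posP k l x2 < posP k l x3 ∧ posP k l x3 < posP k l x4 ∧
    p.r x1 x3 ∧ p.r x2 x4 ∧ ¬ p.r x1 x2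

open scoped Classical in
/-- The (unnormalized) linear map `T̊_p` associated to a partition, as a matrix. -/
noncomputable def Tmat0 {k l : ℕ} (N : ℕ) (p : PP k l) :
    Matrix (Fin l → Fin N) (Fin k → Fin N) ℂ :=
  fun j i => if (∀ x y, p.r x y → Sum.elim i j x = Sum.elim i j y) then 1 else 0

/-- The normalized map `T_p = N^{-β(p)/2} T̊_p`. -/
noncomputable def TmatN {k l : ℕ} (N : ℕ) (p : PP k l) :
    Matrix (Fin l → Fin N) (Fin k → Fin N) ℂ :=
  ((N : ℂ) ^ (-(betaP p : ℂ) / 2)) • Tmat0 N p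

/-- Reindexing equivalence identifying `(ℂ^N)^{⊗m} ⊗ (ℂ^N)^{⊗m'}` with `(ℂ^N)^{⊗(m+m')}`
at the level of index sets. -/
def idxEquiv (m m' N : ℕ) : ((Fin m → Fin N) × (Fin m' → Fin N)) ≃ (Fin (m + m') → Fin N) :=
  (Equiv.sumArrowEquivProdArrow (Fin m) (Fin m') (Fin N)).symm.trans
    (Equiv.arrowCongr finSumFinEquiv (Equiv.refl (Fin N)))

open scoped Classical in
/-- Characterization of validity of a middle index assignment. -/
lemma valid_iff_bigS {k l m N : ℕ} (p : PP k l) (q : PP l m)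
    (i : Fin k → Fin N) (j : Fin m → Fin N) (b : Fin l → Fin N) :
    ((∀ x y, q.r x y → Sum.elim b j x = Sum.elim b j y) ∧
     (∀ x y, p.r x y → Sum.elim i b x = Sum.elim i b y)) ↔
    (∀ x y, (bigS p q).r x y →
      Sum.elim i (Sum.elim b j) x = Sum.elim i (Sum.elim b j) y) := by
  constructor
  · rintro ⟨hq, hp⟩ x y hxy
    induction hxy with
    | rel x y h =>
      rcases h with ⟨a, c, hac, rfl, rfl⟩ | ⟨a, c, hac, rfl, rfl⟩
      · have := hp a c hac; cases a <;> cases c <;> simpa using this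
      · have := hq a c hac; cases a <;> cases c <;> simpa using this
    | refl => rfl
    | symm _ _ _ ih => exact ih.symm
    | trans _ _ _ _ _ ih1 ih2 => exact ih1.trans ih2
  · intro h
    constructor
    · intro x y hxy
      have := h (Sum.inr x) (Sum.inr y)
        (Relation.EqvGen.rel _ _ (Or.inr ⟨x, y, hxy, rfl, rfl⟩))
      cases x <;> cases y <;> simpa using this
    · intro x y hxy
      have := h (Sum.map id Sum.inl x) (Sum.map id Sum.inl y)
        (Relation.EqvGen.rel _ _ (Or.inl ⟨x, y, hxy, rfl, rfl⟩))
      cases x <;> cases y <;> simpa using this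

lemma elim_outer {k l m N : ℕ} (i : Fin k → Fin N) (b : Fin l → Fin N) (j : Fin m → Fin N)
    (u : Fin k ⊕ Fin m) :
    Sum.elim i (Sum.elim b j) (Sum.map id Sum.inr u) = Sum.elim i j u := by
  cases u <;> rfl

open scoped Classical in
/-- The key counting lemma for composition. -/
lemma card_valid {k l m : ℕ} (p : PP k l) (q : PP l m) (N : ℕ) (hN : 1 ≤ N)
    (i : Fin k → Fin N) (j : Fin m → Fin N) :
    (Finset.univ.filter (fun b : Fin l → Fin N =>
      (∀ x y, q.r x y → Sum.elim b j x = Sum.elim b j y) ∧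
      (∀ x y, p.r x y → Sum.elim i b x = Sum.elim i b y))).card =
    if (∀ x y, (compP q p).r x y → Sum.elim i j x = Sum.elim i j y)
      then N ^ rlP q p else 0 := by
  by_cases hc : ∀ x y, (compP q p).r x y → Sum.elim i j x = Sum.elim i j y
  · rw [if_pos hc]
    -- set up notation
    have hval : ∀ (b : Fin l → Fin N),
        ((∀ x y, q.r x y → Sum.elim b j x = Sum.elim b j y) ∧
         (∀ x y, p.r x y → Sum.elim i b x = Sum.elim i b y)) ↔
        (∀ x y, (bigS p q).r x y →
          Sum.elim i (Sum.elim b j) x = Sum.elim i (Sum.elim b j) y) :=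
      valid_iff_bigS p q i j
    rw [← Fintype.card_subtype]
    -- the set of loops
    set C := {c : Quotient (bigS p q) //
      ∀ x, Quotient.mk (bigS p q) x = c → ∃ bidx : Fin l, x = Sum.inr (Sum.inl bidx)} with hC
    -- choice of a middle representative for a loop
    have midspec : ∀ c : C, ∃ bidx : Fin l,
        Quotient.mk (bigS p q) (Sum.inr (Sum.inl bidx)) = c.1 := by
      intro c
      obtain ⟨bidx, hb⟩ := c.2 c.1.out c.1.out_eq
      exact ⟨bidx, by rw [← hb, c.1.out_eq]⟩
    let mid : C → Fin l := fun c => (midspec c).choose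
    have midp : ∀ c : C, Quotient.mk (bigS p q) (Sum.inr (Sum.inl (mid c))) = c.1 :=
      fun c => (midspec c).choose_spec
    -- the restriction map
    let φ : {b : Fin l → Fin N //
        (∀ x y, q.r x y → Sum.elim b j x = Sum.elim b j y) ∧
        (∀ x y, p.r x y → Sum.elim i b x = Sum.elim i b y)} → (C → Fin N) :=
      fun b c => b.1 (mid c)
    have constblock : ∀ (b : Fin l → Fin N),
        ((∀ x y, q.r x y → Sum.elim b j x = Sum.elim b j y) ∧
         (∀ x y, p.r x y → Sum.elim i b x = Sum.elim i b y)) →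
        ∀ x y, Quotient.mk (bigS p q) x = Quotient.mk (bigS p q) y →
          Sum.elim i (Sum.elim b j) x = Sum.elim i (Sum.elim b j) y := by
      intro b hb x y hxy
      exact ((hval b).1 hb) x y (Quotient.exact hxy)
    have hbij : Function.Bijective φ := by
      constructor
      · rintro ⟨b, hb⟩ ⟨b', hb'⟩ hphi
        apply Subtype.ext
        funext bidx
        show b bidx = b' bidx
        by_cases h : ∀ x, Quotient.mk (bigS p q) x = Quotient.mk (bigS p q) (Sum.inr (Sum.inl bidx)) →
            ∃ b0 : Fin l, x = Sum.inr (Sum.inl b0)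
        · let c : C := Subtype.mk (Quotient.mk (bigS p q) (Sum.inr (Sum.inl bidx))) h
          have e1 := constblock b hb (Sum.inr (Sum.inl bidx)) (Sum.inr (Sum.inl (mid c)))
            (midp c).symm
          have e2 := constblock b' hb' (Sum.inr (Sum.inl bidx)) (Sum.inr (Sum.inl (mid c)))
            (midp c).symm
          have e3 : b (mid c) = b' (mid c) := congrFun hphi c
          exact (e1.trans e3).trans e2.symm
        · push_neg at h
          obtain ⟨x, hx1, hx2⟩ := h
          have e1 := constblock b hb (Sum.inr (Sum.inl bidx)) x hx1.symm
          have e2 := constblock b' hb' (Sum.inr (Sum.inl bidx)) x hx1.symm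
          rcases x with a | (bb | cc)
          · exact e1.trans e2.symm
          · exact absurd rfl (hx2 bb)
          · exact e1.trans e2.symm
      · intro g
        -- define value on each block
        let Gval : Quotient (bigS p q) → Fin N := fun c =>
          if h : ∀ x, Quotient.mk (bigS p q) x = c → ∃ bidx : Fin l, x = Sum.inr (Sum.inl bidx)
          then g ⟨c, h⟩
          else Sum.elim i (Sum.elim (fun _ => (⟨0, hN⟩ : Fin N)) j)
            (not_forall.mp h).choose
        let b : Fin l → Fin N := fun bidx => Gval (Quotient.mk (bigS p q) (Sum.inr (Sum.inl bidx)))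
        have keyF : ∀ x, Sum.elim i (Sum.elim b j) x = Gval (Quotient.mk (bigS p q) x) := by
          intro x
          have gen : ∀ (x : Fin k ⊕ (Fin l ⊕ Fin m)),
              (∀ bidx : Fin l, x ≠ Sum.inr (Sum.inl bidx)) →
              Sum.elim i (Sum.elim b j) x = Gval (Quotient.mk (bigS p q) x) := by
            intro x hx
            have hnot : ¬ ∀ y, Quotient.mk (bigS p q) y = Quotient.mk (bigS p q) x →
                ∃ bidx : Fin l, y = Sum.inr (Sum.inl bidx) := by
              intro h
              obtain ⟨bidx, hb⟩ := h x rfl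
              exact hx bidx hb
            simp only [Gval, dif_neg hnot]
            have hyspec := (not_forall.mp hnot).choose_spec
            set y := (not_forall.mp hnot).choose with hy
            rw [Classical.not_imp] at hyspec
            obtain ⟨hy1, hy2⟩ := hyspec
            -- both x and y are outer points
            obtain ⟨u, rfl⟩ : ∃ u : Fin k ⊕ Fin m, x = Sum.map id Sum.inr u := by
              rcases x with a | (bb | cc)
              · exact ⟨Sum.inl a, rfl⟩
              · exact absurd rfl (hx bb)
              · exact ⟨Sum.inr cc, rfl⟩
            obtain ⟨v, hv⟩ : ∃ v : Fin k ⊕ Fin m, y = Sum.map id Sum.inr v := by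
              rcases hyy : y with a | (bb | cc)
              · exact ⟨Sum.inl a, rfl⟩
              · exact absurd (⟨bb, hyy⟩ : ∃ b0 : Fin l, y = Sum.inr (Sum.inl b0)) hy2
              · exact ⟨Sum.inr cc, rfl⟩
            rw [hv] at hy1 ⊢
            have hrel : (bigS p q).r (Sum.map id Sum.inr v) (Sum.map id Sum.inr u) :=
              Quotient.exact hy1
            rw [elim_outer, elim_outer]
            exact (hc v u hrel).symm
          rcases x with a | (bb | cc)
          · exact gen (Sum.inl a) (by simp)
          · rfl
          · exact gen (Sum.inr (Sum.inr cc)) (by simp)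
        have hbval : (∀ x y, q.r x y → Sum.elim b j x = Sum.elim b j y) ∧
            (∀ x y, p.r x y → Sum.elim i b x = Sum.elim i b y) := by
          rw [hval]
          intro x y hxy
          rw [keyF, keyF, Quotient.sound hxy]
        refine ⟨⟨b, hbval⟩, ?_⟩
        funext c
        have : b (mid c) = Gval c.1 := by
          simp only [b]
          rw [midp c]
        simp only [φ, this, Gval, dif_pos c.2]
        rfl
    have : Fintype.card {b : Fin l → Fin N //
        (∀ x y, q.r x y → Sum.elim b j x = Sum.elim b j y) ∧
        (∀ x y, p.r x y → Sum.elim i b x = Sum.elim i b y)} = Fintype.card (C → Fin N) :=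
      Fintype.card_congr (Equiv.ofBijective φ hbij)
    rw [this, Fintype.card_fun, Fintype.card_fin]
    congr 1
    rw [rlP, Nat.card_eq_fintype_card]
  · rw [if_neg hc, Finset.card_eq_zero, Finset.filter_eq_empty_iff]
    intro b _ hb
    apply hc
    intro x y hxy
    have := ((valid_iff_bigS p q i j b).1 hb) (Sum.map id Sum.inr x) (Sum.map id Sum.inr y) hxy
    rwa [elim_outer, elim_outer] at this

open scoped Classical in
lemma sum_valid {k l m : ℕ} (p : PP k l) (q : PP l m) (N : ℕ) (hN : 1 ≤ N)
    (i : Fin k → Fin N) (j : Fin m → Fin N) :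
    (∑ b : Fin l → Fin N,
      if ((∀ x y, q.r x y → Sum.elim b j x = Sum.elim b j y) ∧
          (∀ x y, p.r x y → Sum.elim i b x = Sum.elim i b y)) then (1:ℂ) else 0) =
    if (∀ x y, (compP q p).r x y → Sum.elim i j x = Sum.elim i j y)
      then (N:ℂ) ^ rlP q p else 0 := by
  rw [Finset.sum_boole, card_valid p q N hN i j]
  split_ifs <;> simp

lemma idxEquiv_symm_apply (m m' N : ℕ) (f : Fin (m + m') → Fin N) :
    (idxEquiv m m' N).symm f =
      (fun a => f (Fin.castAdd m' a), fun a => f (Fin.natAdd m a)) := by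
  simp only [idxEquiv, Equiv.symm_trans_apply, Equiv.symm_symm, Equiv.sumArrowEquivProdArrow,
    Equiv.arrowCongr_symm, Equiv.arrowCongr_apply, Equiv.coe_fn_mk, Equiv.refl_symm,
    Equiv.coe_refl, Function.comp]
  refine Prod.ext ?_ ?_ <;> funext a <;> simp

lemma elim_tensorEquiv_symm {k l k' l' N : ℕ}
    (i : Fin (k + k') → Fin N) (j : Fin (l + l') → Fin N)
    (u : (Fin k ⊕ Fin l) ⊕ (Fin k' ⊕ Fin l')) :
    Sum.elim i j ((tensorEquiv k l k' l').symm u) =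
    Sum.elim
      (Sum.elim (fun a => i (Fin.castAdd k' a)) (fun b => j (Fin.castAdd l' b)))
      (Sum.elim (fun a => i (Fin.natAdd k a)) (fun b => j (Fin.natAdd l b))) u := by
  rcases u with (a | b) | (a | b) <;>
    simp [tensorEquiv, Equiv.sumSumSumComm]

/-- `T̊_{p*} = (T̊_p)*`, `T̊_{p⊗q} = T̊_p ⊗ T̊_q` and
`T̊_q ∘ T̊_p = N^{rl(q,p)} T̊_{qp}`. -/
theorem Tmat0_rules {k l m k' l' : ℕ} (N : ℕ) (hN : 1 ≤ N)
    (p : PP k l) (q : PP l m) (p' : PP k' l') :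
    Tmat0 N (swapP p) = (Tmat0 N p).conjTranspose ∧
    Tmat0 N (tensorP p p') =
      Matrix.reindex (idxEquiv l l' N) (idxEquiv k k' N)
        (Matrix.kroneckerMap (· * ·) (Tmat0 N p) (Tmat0 N p')) ∧
    Tmat0 N q * Tmat0 N p = (N : ℂ) ^ (rlP q p) • Tmat0 N (compP q p) := by
  classical
  refine ⟨?_, ?_, ?_⟩
  · ext jv iv
    rw [Matrix.conjTranspose_apply]
    simp only [Tmat0]
    have hiff : (∀ x y, (swapP p).r x y → Sum.elim iv jv x = Sum.elim iv jv y) ↔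
        (∀ x y, p.r x y → Sum.elim jv iv x = Sum.elim jv iv y) := by
      constructor
      · intro h x y hxy
        have := h (Sum.swap x) (Sum.swap y) (by cases x <;> cases y <;> exact hxy)
        cases x <;> cases y <;> simpa using this
      · intro h x y hxy
        have := h (Sum.swap x) (Sum.swap y) (by cases x <;> cases y <;> exact hxy)
        cases x <;> cases y <;> simpa using this
    rw [if_congr hiff rfl rfl]
    split_ifs <;> simp
  · ext jv iv
    rw [Matrix.reindex_apply, Matrix.submatrix_apply, idxEquiv_symm_apply,
      idxEquiv_symm_apply, Matrix.kroneckerMap_apply]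
    simp only [Tmat0]
    have hiff : (∀ x y, (tensorP p p').r x y → Sum.elim iv jv x = Sum.elim iv jv y) ↔
        ((∀ x y, p.r x y →
            Sum.elim (fun a => iv (Fin.castAdd k' a)) (fun b => jv (Fin.castAdd l' b)) x =
            Sum.elim (fun a => iv (Fin.castAdd k' a)) (fun b => jv (Fin.castAdd l' b)) y) ∧
         (∀ x y, p'.r x y →
            Sum.elim (fun a => iv (Fin.natAdd k a)) (fun b => jv (Fin.natAdd l b)) x =
            Sum.elim (fun a => iv (Fin.natAdd k a)) (fun b => jv (Fin.natAdd l b)) y)) := by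
      constructor
      · intro h
        constructor
        · intro x y hxy
          have := h ((tensorEquiv k l k' l').symm (Sum.inl x))
            ((tensorEquiv k l k' l').symm (Sum.inl y)) ?_
          · rw [elim_tensorEquiv_symm, elim_tensorEquiv_symm] at this
            simpa using this
          · show Sum.LiftRel p.r p'.r
              ((tensorEquiv k l k' l') ((tensorEquiv k l k' l').symm (Sum.inl x)))
              ((tensorEquiv k l k' l') ((tensorEquiv k l k' l').symm (Sum.inl y)))
            rw [Equiv.apply_symm_apply, Equiv.apply_symm_apply]
            exact Sum.LiftRel.inl hxy
        · intro x y hxy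
          have := h ((tensorEquiv k l k' l').symm (Sum.inr x))
            ((tensorEquiv k l k' l').symm (Sum.inr y)) ?_
          · rw [elim_tensorEquiv_symm, elim_tensorEquiv_symm] at this
            simpa using this
          · show Sum.LiftRel p.r p'.r
              ((tensorEquiv k l k' l') ((tensorEquiv k l k' l').symm (Sum.inr x)))
              ((tensorEquiv k l k' l') ((tensorEquiv k l k' l').symm (Sum.inr y)))
            rw [Equiv.apply_symm_apply, Equiv.apply_symm_apply]
            exact Sum.LiftRel.inr hxy
      · rintro ⟨h1, h2⟩ x y hxy
        have hxy' : Sum.LiftRel p.r p'.r ((tensorEquiv k l k' l') x)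
            ((tensorEquiv k l k' l') y) := hxy
        rw [← (tensorEquiv k l k' l').symm_apply_apply x,
          ← (tensorEquiv k l k' l').symm_apply_apply y,
          elim_tensorEquiv_symm, elim_tensorEquiv_symm]
        generalize (tensorEquiv k l k' l') x = u at hxy' ⊢
        generalize (tensorEquiv k l k' l') y = v at hxy' ⊢
        cases hxy' with
        | inl h => simpa using h1 _ _ h
        | inr h => simpa using h2 _ _ h
    rw [if_congr hiff rfl rfl]
    by_cases h1 : (∀ x y, p.r x y →
        Sum.elim (fun a => iv (Fin.castAdd k' a)) (fun b => jv (Fin.castAdd l' b)) x =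
        Sum.elim (fun a => iv (Fin.castAdd k' a)) (fun b => jv (Fin.castAdd l' b)) y) <;>
      by_cases h2 : (∀ x y, p'.r x y →
        Sum.elim (fun a => iv (Fin.natAdd k a)) (fun b => jv (Fin.natAdd l b)) x =
        Sum.elim (fun a => iv (Fin.natAdd k a)) (fun b => jv (Fin.natAdd l b)) y)
    · rw [if_pos ⟨h1, h2⟩, if_pos h1, if_pos h2, one_mul]
    · rw [if_neg (fun hh => h2 hh.2), if_neg h2, mul_zero]
    · rw [if_neg (fun hh => h1 hh.1), if_neg h1, zero_mul]
    · rw [if_neg (fun hh => h1 hh.1), if_neg h1, zero_mul]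
  · ext jv iv
    rw [Matrix.mul_apply, Matrix.smul_apply]
    simp only [Tmat0]
    have step : ∀ b : Fin l → Fin N,
        (if (∀ x y, q.r x y → Sum.elim b jv x = Sum.elim b jv y) then (1:ℂ) else 0) *
        (if (∀ x y, p.r x y → Sum.elim iv b x = Sum.elim iv b y) then 1 else 0) =
        if ((∀ x y, q.r x y → Sum.elim b jv x = Sum.elim b jv y) ∧
            (∀ x y, p.r x y → Sum.elim iv b x = Sum.elim iv b y)) then 1 else 0 := by
      intro b
      by_cases hA : (∀ x y, q.r x y → Sum.elim b jv x = Sum.elim b jv y) <;>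
        by_cases hB : (∀ x y, p.r x y → Sum.elim iv b x = Sum.elim iv b y)
      · rw [if_pos hA, if_pos hB, if_pos ⟨hA, hB⟩, one_mul]
      · rw [if_neg hB, if_neg (mt And.right hB), mul_zero]
      · rw [if_neg hA, if_neg (mt And.left hA), zero_mul]
      · rw [if_neg hA, if_neg (mt And.left hA), zero_mul]
    rw [Finset.sum_congr rfl (fun b _ => step b), sum_valid p q N hN iv jv]
    split_ifs <;> simp
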